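/- There exists a finite deterministic MDP, a policy π, a leaf evaluation u = V^π, and a finite-horizon π-consistent (but non-monotonic) choice function ψ such that the online policy π' = Π^ψ_u satisfies V^{π'}(s) < V^π(s) for some state s. Hence π-consistency alone does not imply π-safety. -/

import Mathlib

open Finset

/-- A finite Markov Decision Process with transition kernel `P` and reward `R`. -/
structure MDP (S A : Type) [Fintype S] where
  P : S → A → S → ℝ
  R : S → A → ℝ
  P_nonneg : ∀ s a s', 0 ≤ P s a s'
  P_sum : ∀ s a, ∑ s', P s a s' = 1

/-- A state path: a root state followed by an alternating list of actions and states. -/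
abbrev SPath (S A : Type) := S × List (A × S)

variable {S A : Type}

/-- The current (last) state of a path. -/
def curS (p : SPath S A) : S := (p.2.getLast?.map Prod.snd).getD p.1

/-- Extend a path by an action and a successor state. -/
def extP (p : SPath S A) (a : A) (s' : S) : SPath S A := (p.1, p.2 ++ [(a, s')])

/-- Remove the first state-action pair of a path (identity on length-0 paths). -/
def dropFirst (p : SPath S A) : SPath S A :=
  match p with
  | (s₀, []) => (s₀, [])
  | (_, (_, s₁) :: rest) => (s₁, rest)

/-- The length-zero path consisting of a single root state. -/
def rootP (s : S) : SPath S A := (s, ([] : List (A × S)))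

/-- `p` is ψ-satisfying: every action along the path is allowed by ψ at the
corresponding prefix. -/
def SatCF (ψ : SPath S A → Finset A) (p : SPath S A) : Prop :=
  ∀ n (h : n < p.2.length), (p.2.get ⟨n, h⟩).1 ∈ ψ (p.1, p.2.take n)

/-- ψ is π-consistent: π's action is allowed at every non-leaf node. -/
def ConsistentCF (ψ : SPath S A → Finset A) (π : S → A) : Prop :=
  ∀ p, (ψ p).Nonempty → π (curS p) ∈ ψ p

/-- ψ is monotonic: `ψ(p;s) ⊆ ψ(⌟p;s)`. -/
def MonoCF (ψ : SPath S A → Finset A) : Prop :=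
  ∀ p : SPath S A, ψ p ⊆ ψ (dropFirst p)

/-- ψ has horizon at most H: every ψ-satisfying path of length ≥ H is a leaf. -/
def HorizonLE (ψ : SPath S A → Finset A) (H : ℕ) : Prop :=
  ∀ p : SPath S A, SatCF ψ p → H ≤ p.2.length → ψ p = ∅

/-- every leaf path of ψ has length at least h (min-horizon lower bound). -/
def MinLeaf (ψ : SPath S A → Finset A) (h : ℕ) : Prop :=
  ∀ p : SPath S A, SatCF ψ p → ψ p = ∅ → h ≤ p.2.length

variable [Fintype S] [Fintype A]

/-- Tree value with explicit fuel (remaining depth). -/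
noncomputable def treeVal (M : MDP S A) (γ : ℝ) (ψ : SPath S A → Finset A)
    (u : S → ℝ) : ℕ → SPath S A → ℝ
  | 0, p => u (curS p)
  | n + 1, p =>
      if h : (ψ p).Nonempty then
        (ψ p).sup' h fun a =>
          M.R (curS p) a + γ * ∑ s', M.P (curS p) a s' * treeVal M γ ψ u n (extP p a s')
      else u (curS p)

/-- `V^ψ_u(p;s)` for a choice function ψ of horizon H. -/
noncomputable def Vt (M : MDP S A) (γ : ℝ) (ψ : SPath S A → Finset A)
    (u : S → ℝ) (H : ℕ) (p : SPath S A) : ℝ :=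
  treeVal M γ ψ u (H - p.2.length) p

/-- `Q^ψ_u(s;a)` at a root node. -/
noncomputable def QrootCF (M : MDP S A) (γ : ℝ) (ψ : SPath S A → Finset A)
    (u : S → ℝ) (H : ℕ) (s : S) (a : A) : ℝ :=
  M.R s a + γ * ∑ s', M.P s a s' * Vt M γ ψ u H (extP (rootP s) a s')

/-- π' is a greedy root policy for the search tree of ψ with leaf evaluation u. -/
def IsGreedy (M : MDP S A) (γ : ℝ) (ψ : SPath S A → Finset A)
    (u : S → ℝ) (H : ℕ) (π' : S → A) : Prop :=
  ∀ s, π' s ∈ ψ (rootP s) ∧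
    ∀ a ∈ ψ (rootP s), QrootCF M γ ψ u H s a ≤ QrootCF M γ ψ u H s (π' s)

/-- `V` is the value function of the stationary policy π. -/
def IsValue (M : MDP S A) (γ : ℝ) (π : S → A) (V : S → ℝ) : Prop :=
  ∀ s, V s = M.R s (π s) + γ * ∑ s', M.P s (π s) s' * V s'

/-- Policy-restricted Bellman backup `B_π[V](s)`. -/
noncomputable def Bpol (M : MDP S A) (γ : ℝ) (π : S → A) (V : S → ℝ) (s : S) : ℝ :=
  M.R s (π s) + γ * ∑ s', M.P s (π s) s' * V s'

/-- Deterministic next-state function of the counter-example. -/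
def nxt : Fin 3 → Fin 3 → Fin 3 := fun s a =>
  if a = 1 then (if s = 0 then 1 else 2) else s

/-- The counter-example MDP. -/
noncomputable def Mce : MDP (Fin 3) (Fin 3) where
  P := fun s a t => if t = nxt s a then 1 else 0
  R := fun s a => if a = 1 then (if s = 1 then 10 else 0) else (if s = 0 then 1 else 0)
  P_nonneg := by intro s a t; split <;> norm_num
  P_sum := by intro s a; simp [Finset.sum_ite_eq']

lemma Mce_sum (s a : Fin 3) (f : Fin 3 → ℝ) :
    ∑ t, Mce.P s a t * f t = f (nxt s a) := by
  simp only [Mce, ite_mul, one_mul, zero_mul]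
  exact Finset.sum_ite_eq' _ _ _ |>.trans (by simp)

/-- The choice function of the counter-example. -/
def ψce : SPath (Fin 3) (Fin 3) → Finset (Fin 3) := fun p =>
  if p.2.length = 0 then (if p.1 = 0 then {0, 1} else {0})
  else if p.2.length = 1 then {0, 1} else ∅

def Vpice : Fin 3 → ℝ := fun s => if s = 0 then 2 else 0

lemma sup'_pair (f : Fin 3 → ℝ) (h) :
    ({0, 1} : Finset (Fin 3)).sup' h f = max (f 0) (f 1) := by
  apply le_antisymm
  · refine Finset.sup'_le _ _ ?_
    intro b hb
    fin_cases hb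
    · exact le_max_left _ _
    · exact le_max_right _ _
  · exact max_le (Finset.le_sup' f (by decide)) (Finset.le_sup' f (by decide))

lemma curS_ext1 (s a t : Fin 3) : curS (extP (rootP s) a t) = t := rfl
lemma curS_ext2 (p : SPath (Fin 3) (Fin 3)) (a t : Fin 3) :
    curS (extP p a t) = t := by
  simp [curS, extP]

lemma treeVal0 (γ : ℝ) (p : SPath (Fin 3) (Fin 3)) :
    treeVal Mce γ ψce Vpice 0 p = Vpice (curS p) := rfl

lemma ψce_len1 (p : SPath (Fin 3) (Fin 3)) (hp : p.2.length = 1) :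
    ψce p = {0, 1} := by simp [ψce, hp]

/-- Value of the depth-1 nodes of the search tree. -/
lemma treeVal1 (s a t : Fin 3) :
    treeVal Mce (1/2 : ℝ) ψce Vpice 1 (extP (rootP s) a t) =
      max (Mce.R t 0 + (1/2) * Vpice (nxt t 0))
          (Mce.R t 1 + (1/2) * Vpice (nxt t 1)) := by
  have hlen : (extP (rootP s) a t).2.length = 1 := rfl
  have hψ : ψce (extP (rootP s) a t) = {0, 1} := ψce_len1 _ hlen
  have hne : (ψce (extP (rootP s) a t)).Nonempty := by rw [hψ]; exact ⟨0, by decide⟩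
  show treeVal Mce (1/2 : ℝ) ψce Vpice (0 + 1) _ = _
  rw [treeVal, dif_pos hne]
  have : ∀ b : Fin 3,
      Mce.R (curS (extP (rootP s) a t)) b + (1/2 : ℝ) *
        ∑ t', Mce.P (curS (extP (rootP s) a t)) b t' *
          treeVal Mce (1/2) ψce Vpice 0 (extP (extP (rootP s) a t) b t') =
      Mce.R t b + (1/2) * Vpice (nxt t b) := by
    intro b
    rw [curS_ext1]
    congr 1
    rw [show (fun t' => Mce.P t b t' * treeVal Mce (1/2 : ℝ) ψce Vpice 0
        (extP (extP (rootP s) a t) b t')) = fun t' => Mce.P t b t' * Vpice t' from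
      funext fun t' => by rw [treeVal0, curS_ext2]] at *
    rw [Mce_sum t b Vpice]
  exact (Finset.sup'_congr hne hψ (fun b _ => this b)).trans (sup'_pair _ _)

/-- Value of the root Q-function. -/
lemma Qroot_eval (s a : Fin 3) :
    QrootCF Mce (1/2 : ℝ) ψce Vpice 2 s a =
      Mce.R s a + (1/2) * (max (Mce.R (nxt s a) 0 + (1/2) * Vpice (nxt (nxt s a) 0))
          (Mce.R (nxt s a) 1 + (1/2) * Vpice (nxt (nxt s a) 1))) := by
  unfold QrootCF
  congr 1
  have : ∀ t : Fin 3, Vt Mce (1/2 : ℝ) ψce Vpice 2 (extP (rootP s) a t) =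
      max (Mce.R t 0 + (1/2) * Vpice (nxt t 0))
          (Mce.R t 1 + (1/2) * Vpice (nxt t 1)) := by
    intro t
    unfold Vt
    rw [show (2 - (extP (rootP s) a t).2.length) = 1 from rfl]
    exact treeVal1 s a t
  rw [show (fun t => Mce.P s a t * Vt Mce (1/2 : ℝ) ψce Vpice 2 (extP (rootP s) a t)) =
    fun t => Mce.P s a t * (max (Mce.R t 0 + (1/2) * Vpice (nxt t 0))
          (Mce.R t 1 + (1/2) * Vpice (nxt t 1))) from funext fun t => by rw [this t]]
  rw [Mce_sum]

/-- Counter-example: there is a finite deterministic MDP, base policy π with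
value `V^π`, and a finite-horizon π-consistent (non-monotonic) choice function
ψ with leaf evaluation `u = V^π` whose greedy online policy π' is strictly
worse than π at some state: π-consistency alone does not imply π-safety. -/
theorem stmt_18 :
    ∃ (M : MDP (Fin 3) (Fin 3)) (γ : ℝ) (π : Fin 3 → Fin 3) (Vpi : Fin 3 → ℝ)
      (H : ℕ) (ψ : SPath (Fin 3) (Fin 3) → Finset (Fin 3))
      (π' : Fin 3 → Fin 3) (Vpi' : Fin 3 → ℝ) (s : Fin 3),
      0 < γ ∧ γ < 1 ∧
      (∀ s a, ∃ s', ∀ t, M.P s a t = if t = s' then 1 else 0) ∧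
      IsValue M γ π Vpi ∧
      HorizonLE ψ H ∧
      ConsistentCF ψ π ∧
      IsGreedy M γ ψ Vpi H π' ∧
      IsValue M γ π' Vpi' ∧
      Vpi' s < Vpi s := by
  refine ⟨Mce, 1/2, fun _ => 0, Vpice, 2, ψce,
    fun s => if s = 0 then 1 else 0, fun _ => 0, 0, by norm_num, by norm_num,
    ?_, ?_, ?_, ?_, ?_, ?_, ?_⟩
  · exact fun s a => ⟨nxt s a, fun t => rfl⟩
  · -- IsValue for π, Vpi
    intro s
    rw [Mce_sum]
    fin_cases s <;> simp [Vpice, Mce, nxt] <;> norm_num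
  · -- HorizonLE
    intro p _ hlen
    unfold ψce
    rw [if_neg (by omega), if_neg (by omega)]
  · -- Consistent
    intro p hne
    by_cases h0 : p.2.length = 0
    · by_cases h1 : p.1 = 0 <;> simp [ψce, h0, h1]
    · by_cases h1 : p.2.length = 1
      · simp [ψce, h0, h1]
      · exfalso; simp [ψce, h0, h1] at hne
  · -- IsGreedy
    intro s
    constructor
    · fin_cases s <;> simp [ψce, rootP] <;> decide
    · intro a ha
      rw [Qroot_eval, Qroot_eval]
      have hroot : ψce (rootP s) = if s = 0 then {0, 1} else {0} := rfl
      rw [hroot] at ha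
      fin_cases s <;> simp at ha <;>
        first
        | (rcases ha with rfl | rfl <;> simp [Mce, Vpice, nxt] <;> norm_num)
        | (subst ha; simp [Mce, Vpice, nxt])
  · -- IsValue for π', Vpi'
    intro s
    rw [Mce_sum]
    fin_cases s <;> simp [Mce, nxt]
  · -- strict inequality
    simp [Vpice]
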